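/- With P_n defined by q^{2n+ν+1}P_{n+1}(λ) - q^{2n}(1+q^{2ν})P_n(λ) + q^{2n+ν-1}P_{n-1}(λ) = λP_n(λ), P_{-1}=0, P_0=1, one has for all n ≥ 0 and λ ∈ ℂ \ {0}: P_n(-λ²) = q^{-n(ν+1)} λ^{2ν} (q^{-2ν}-1)^{-1} [j_ν(q^{-n}λ;q²)γ_ν(qλ) - γ_ν(q^{-n}λ)j_ν(qλ;q²)], where γ_ν(x) = x^{-2ν}j_{-ν}(q^{-ν}x;q²). -/

import Mathlib

open scoped BigOperators
open Filter Topology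

noncomputable def qPochC (q a : ℂ) (n : ℕ) : ℂ := ∏ i ∈ Finset.range n, (1 - a * q ^ i)

lemma qPochC_succ (q a : ℂ) (n : ℕ) :
    qPochC q a (n+1) = qPochC q a n * (1 - a * q ^ n) := Finset.prod_range_succ _ _

-- existence of uniform lower bound δ for the factors
lemma exists_delta {Q a : ℂ} (hQ : ‖Q‖ < 1) (ha : ∀ i : ℕ, 1 - a * Q ^ i ≠ 0) :
    ∃ δ : ℝ, 0 < δ ∧ δ ≤ 1 ∧ ∀ i : ℕ, δ ≤ ‖1 - a * Q ^ i‖ := by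
  have hQ0 : 0 ≤ ‖Q‖ := norm_nonneg _
  have htend : Filter.Tendsto (fun i : ℕ => ‖a‖ * ‖Q‖ ^ i) atTop (nhds 0) := by
    simpa using (tendsto_pow_atTop_nhds_zero_of_norm_lt_one (by simpa using hQ)).const_mul ‖a‖
  obtain ⟨N, hN⟩ := (Filter.tendsto_atTop'.1 htend) (Set.Iio (1/2 : ℝ)) (Iio_mem_nhds (by norm_num))
  -- for i ≥ N : ‖1 - a Q^i‖ ≥ 1/2
  have hbig : ∀ i, N ≤ i → (1/2 : ℝ) ≤ ‖1 - a * Q ^ i‖ := by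
    intro i hi
    have h1 : ‖a * Q ^ i‖ < 1/2 := by
      have := hN i hi
      simpa [norm_mul, norm_pow] using this
    have := norm_sub_norm_le (1 : ℂ) (a * Q ^ i)
    have h2 : ‖(1:ℂ)‖ = 1 := by simp
    nlinarith [norm_nonneg (1 - a * Q ^ i)]
  -- min over i < N
  set s : Finset ℕ := Finset.range N with hs
  by_cases hN0 : N = 0
  · exact ⟨1/2, by norm_num, by norm_num, fun i => hbig i (by omega)⟩
  · have hne : s.Nonempty := ⟨0, by simp [hs]; omega⟩
    set m := s.inf' hne (fun i => ‖1 - a * Q ^ i‖) with hm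
    have hmpos : 0 < m := by
      rw [hm]
      rw [Finset.lt_inf'_iff]
      intro i _
      exact norm_pos_iff.2 (ha i)
    refine ⟨min (min m (1/2)) 1, ?_, ?_, ?_⟩
    · positivity
    · exact min_le_right _ _
    · intro i
      rcases lt_or_ge i N with h | h
      · calc min (min m (1/2)) 1 ≤ m := le_trans (min_le_left _ _) (min_le_left _ _)
          _ ≤ ‖1 - a * Q ^ i‖ := Finset.inf'_le _ (by simp [hs, h])
      · calc min (min m (1/2)) 1 ≤ 1/2 := le_trans (min_le_left _ _) (min_le_right _ _)
          _ ≤ ‖1 - a * Q ^ i‖ := hbig i h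

lemma qPochC_norm_ge {Q a : ℂ} {δ : ℝ} (hδ0 : 0 < δ) (hδ : ∀ i : ℕ, δ ≤ ‖1 - a * Q ^ i‖) :
    ∀ n : ℕ, δ ^ n ≤ ‖qPochC Q a n‖ := by
  intro n
  induction n with
  | zero => simp [qPochC]
  | succ n ih =>
    rw [qPochC_succ, pow_succ, norm_mul]
    exact mul_le_mul ih (hδ n) hδ0.le (le_trans (pow_nonneg hδ0.le n) ih)

lemma qPochC_ne_zero {Q a : ℂ} (ha : ∀ i : ℕ, 1 - a * Q ^ i ≠ 0) (n : ℕ) :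
    qPochC Q a n ≠ 0 := Finset.prod_ne_zero_iff.2 fun i _ => ha i

noncomputable def jterm (Q a x : ℂ) (k : ℕ) : ℂ :=
  (-1)^k * Q ^ (k*(k+1)) * x ^ (2*k) / (qPochC (Q^2) (Q^2) k * qPochC (Q^2) a k)

lemma jterm_succ {Q a : ℂ} (h1 : ∀ i : ℕ, 1 - Q^2 * (Q^2) ^ i ≠ 0)
    (h2 : ∀ i : ℕ, 1 - a * (Q^2) ^ i ≠ 0) (x : ℂ) (k : ℕ) :
    jterm Q a x (k+1) * ((1 - Q^2 * (Q^2) ^ k) * (1 - a * (Q^2) ^ k))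
      = jterm Q a x k * (-(Q ^ (2*(k+1))) * x^2) := by
  have hE : (1 - Q^2 * (Q^2) ^ k) * (1 - a * (Q^2) ^ k) ≠ 0 := mul_ne_zero (h1 k) (h2 k)
  have e1 : (k+1)*(k+1+1) = k*(k+1) + 2*(k+1) := by ring
  have e2 : 2*(k+1) = 2*k + 2 := by ring
  rw [jterm, jterm, qPochC_succ, qPochC_succ]
  rw [show (qPochC (Q^2) (Q^2) k * (1 - Q^2*(Q^2)^k)) * (qPochC (Q^2) a k * (1 - a*(Q^2)^k))
      = (qPochC (Q^2) (Q^2) k * qPochC (Q^2) a k) * ((1 - Q^2*(Q^2)^k) * (1 - a*(Q^2)^k)) from by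
    ring]
  rw [div_mul_eq_mul_div, mul_div_assoc, div_mul_cancel_right₀ hE, div_eq_mul_inv,
    e1, pow_add, e2, pow_add, pow_succ]
  ring

-- the real bounding sequence
lemma summable_bound {c R b : ℝ} (hc0 : 0 ≤ c) (hc : c < 1) (hR : 0 ≤ R) (hb : 0 < b) :
    Summable (fun k : ℕ => c ^ (k*(k+1)) * R ^ (2*k) / b ^ k) := by
  set u : ℕ → ℝ := fun k => c ^ (k*(k+1)) * R ^ (2*k) / b ^ k with hu
  have hpos : ∀ k, 0 ≤ u k := fun k => by positivity
  have hrat : ∀ k, u (k+1) = u k * (c ^ (2*(k+1)) * R ^ 2 / b) := by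
    intro k
    have e1 : (k+1)*(k+1+1) = k*(k+1) + 2*(k+1) := by ring
    have e2 : 2*(k+1) = 2*k + 2 := by ring
    simp only [hu]
    rw [e1, pow_add, e2, pow_add, pow_succ]
    field_simp
    ring
  have htend : Tendsto (fun k : ℕ => c ^ (2*(k+1)) * R ^ 2 / b) atTop (nhds 0) := by
    have : Tendsto (fun k : ℕ => c ^ (2*(k+1))) atTop (nhds 0) := by
      have h := tendsto_pow_atTop_nhds_zero_of_lt_one hc0 hc
      have := h.comp (tendsto_atTop_mono (fun k : ℕ => by omega : ∀ k : ℕ, k ≤ 2*(k+1)) tendsto_id)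
      exact this
    simpa using (this.mul_const (R^2)).div_const b
  apply summable_of_ratio_norm_eventually_le (r := 1/2) (by norm_num)
  obtain ⟨N, hN⟩ := (Filter.tendsto_atTop'.1 htend) (Set.Iio (1/2 : ℝ)) (Iio_mem_nhds (by norm_num))
  filter_upwards [Filter.eventually_ge_atTop N] with k hk
  rw [Real.norm_of_nonneg (hpos _), Real.norm_of_nonneg (hpos _), hrat]
  have h3 : c ^ (2*(k+1)) * R ^ 2 / b < 1/2 := hN k hk
  have h4 : 0 ≤ c ^ (2*(k+1)) * R ^ 2 / b := by positivity
  nlinarith [hpos k]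

lemma jterm_bound {Q a : ℂ} {δ₁ δ₂ : ℝ} (hδ₁0 : 0 < δ₁) (hδ₂0 : 0 < δ₂)
    (hδ₁ : ∀ n : ℕ, δ₁ ^ n ≤ ‖qPochC (Q^2) (Q^2) n‖)
    (hδ₂ : ∀ n : ℕ, δ₂ ^ n ≤ ‖qPochC (Q^2) a n‖)
    {x : ℂ} {R : ℝ} (hx : ‖x‖ ≤ R) (k : ℕ) :
    ‖jterm Q a x k‖ ≤ ‖Q‖ ^ (k*(k+1)) * R ^ (2*k) / (δ₁*δ₂) ^ k := by
  rw [jterm, norm_div, norm_mul, norm_mul, norm_pow, norm_pow, norm_pow, norm_mul]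
  have h1 : ‖(-1 : ℂ)‖ = 1 := by simp
  rw [h1, one_pow, one_mul]
  have hR0 : 0 ≤ R := le_trans (norm_nonneg x) hx
  have hnum : ‖Q‖ ^ (k*(k+1)) * ‖x‖ ^ (2*k) ≤ ‖Q‖ ^ (k*(k+1)) * R ^ (2*k) := by
    apply mul_le_mul_of_nonneg_left (pow_le_pow_left₀ (norm_nonneg x) hx _) (by positivity)
  have hden : (δ₁*δ₂) ^ k ≤ ‖qPochC (Q^2) (Q^2) k‖ * ‖qPochC (Q^2) a k‖ := by
    rw [mul_pow]
    exact mul_le_mul (hδ₁ k) (hδ₂ k) (by positivity) (le_trans (by positivity) (hδ₁ k))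
  apply div_le_div₀ (by positivity) hnum (by positivity) hden

lemma summable_jterm {Q a : ℂ} (hQ : ‖Q‖ < 1) {δ₁ δ₂ : ℝ} (hδ₁0 : 0 < δ₁) (hδ₂0 : 0 < δ₂)
    (hδ₁ : ∀ n : ℕ, δ₁ ^ n ≤ ‖qPochC (Q^2) (Q^2) n‖)
    (hδ₂ : ∀ n : ℕ, δ₂ ^ n ≤ ‖qPochC (Q^2) a n‖) (x : ℂ) :
    Summable (jterm Q a x) := by
  apply Summable.of_norm_bounded (summable_bound (norm_nonneg Q) hQ (norm_nonneg x)
    (by positivity : (0:ℝ) < δ₁*δ₂))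
  exact fun k => jterm_bound hδ₁0 hδ₂0 hδ₁ hδ₂ le_rfl k

lemma continuousAt_jsum {Q a : ℂ} (hQ : ‖Q‖ < 1) {δ₁ δ₂ : ℝ} (hδ₁0 : 0 < δ₁) (hδ₂0 : 0 < δ₂)
    (hδ₁ : ∀ n : ℕ, δ₁ ^ n ≤ ‖qPochC (Q^2) (Q^2) n‖)
    (hδ₂ : ∀ n : ℕ, δ₂ ^ n ≤ ‖qPochC (Q^2) a n‖) :
    ContinuousAt (fun x : ℂ => ∑' k, jterm Q a x k) 0 := by
  have hc : ContinuousOn (fun x : ℂ => ∑' k, jterm Q a x k) (Metric.ball 0 1) := by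
    apply continuousOn_tsum (u := fun k => ‖Q‖ ^ (k*(k+1)) * (1:ℝ) ^ (2*k) / (δ₁*δ₂) ^ k)
    · intro k
      apply Continuous.continuousOn
      unfold jterm
      fun_prop
    · exact summable_bound (norm_nonneg Q) hQ zero_le_one (by positivity)
    · intro k x hx
      simp only [Metric.mem_ball, dist_zero_right] at hx
      exact jterm_bound hδ₁0 hδ₂0 hδ₁ hδ₂ hx.le k
  exact hc.continuousAt (Metric.ball_mem_nhds 0 one_pos)

lemma jsum_zero {Q a : ℂ} : (∑' k, jterm Q a 0 k) = 1 := by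
  rw [tsum_eq_single 0]
  · simp [jterm, qPochC]
  · intro k hk
    simp only [jterm]
    rw [zero_pow (by omega : 2*k ≠ 0)]
    simp

-- new material
lemma summable_jterm' {Q a : ℂ} (hQ : ‖Q‖ < 1)
    (h1 : ∀ i : ℕ, 1 - Q^2 * (Q^2) ^ i ≠ 0)
    (h2 : ∀ i : ℕ, 1 - a * (Q^2) ^ i ≠ 0) (x : ℂ) :
    Summable (jterm Q a x) := by
  have hQ2 : ‖Q^2‖ < 1 := by
    rw [norm_pow]
    exact pow_lt_one₀ (norm_nonneg _) hQ (by norm_num)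
  obtain ⟨δ₁, hδ₁0, -, hδ₁⟩ := exists_delta hQ2 h1
  obtain ⟨δ₂, hδ₂0, -, hδ₂⟩ := exists_delta hQ2 h2
  exact summable_jterm hQ hδ₁0 hδ₂0 (qPochC_norm_ge hδ₁0 hδ₁) (qPochC_norm_ge hδ₂0 hδ₂) x

lemma jterm_Qmul (Q a x : ℂ) (k : ℕ) : jterm Q a (Q*x) k = Q^(2*k) * jterm Q a x k := by
  unfold jterm; rw [mul_pow]; ring

lemma jterm_Q2mul (Q a x : ℂ) (k : ℕ) :
    jterm Q a (Q^2*x) k = Q^(2*k) * (Q^(2*k) * jterm Q a x k) := by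
  unfold jterm; rw [mul_pow, ← pow_mul]
  rw [show 2*(2*k) = 2*k + 2*k from by ring, pow_add]
  ring

lemma jsum_FE {Q a b : ℂ} (hQ : ‖Q‖ < 1)
    (h1 : ∀ i : ℕ, 1 - Q^2 * (Q^2) ^ i ≠ 0)
    (h2 : ∀ i : ℕ, 1 - a * (Q^2) ^ i ≠ 0) (hab : a = b * Q^2) (x : ℂ) :
    (∑' k, jterm Q a x k) - (1+b) * (∑' k, jterm Q a (Q*x) k)
        + b * (∑' k, jterm Q a (Q^2*x) k)
      = -((Q*x)^2) * ∑' k, jterm Q a (Q*x) k := by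
  have S1 := summable_jterm' hQ h1 h2 x
  have S2 := summable_jterm' hQ h1 h2 (Q*x)
  have S3 := summable_jterm' hQ h1 h2 (Q^2*x)
  set g : ℕ → ℂ := fun k => jterm Q a x k * (Q ^ (2*(k+1)) * x^2) with hg
  set w : ℕ → ℂ := fun k => -(jterm Q a x k) * ((1 - Q^(2*k)) * (1 - b * Q^(2*k))) with hw
  have hw0 : w 0 = 0 := by simp [hw]
  have hwg : ∀ k, w (k+1) = g k := by
    intro k
    have h := jterm_succ h1 h2 x k
    have e1 : Q^(2*(k+1)) = Q^2 * (Q^2)^k := by rw [← pow_mul]; ring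
    simp only [hw, hg]
    rw [e1] at h ⊢
    rw [← mul_assoc b, ← hab]
    linear_combination -h
  -- summability of g and w
  have Sg : Summable g := by
    have : g = fun k => (Q^2*x^2) * jterm Q a (Q*x) k := by
      funext k
      rw [jterm_Qmul]
      simp only [hg]
      rw [show 2*(k+1) = 2*k+2 from by ring, pow_add]
      ring
    rw [this]
    exact S2.mul_left _
  have Sw : Summable w := by
    rw [← summable_nat_add_iff 1]
    exact Sg.congr (fun k => (hwg k).symm)
  have hsumw : ∑' k, w k = ∑' k, g k := by
    rw [Summable.tsum_eq_zero_add Sw, hw0, zero_add]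
    exact tsum_congr hwg
  -- rewrite the three sums in terms of jterm Q a x
  have key : (∑' k, jterm Q a x k) - (1+b) * (∑' k, jterm Q a (Q*x) k)
        + b * (∑' k, jterm Q a (Q^2*x) k) + ((Q*x)^2) * (∑' k, jterm Q a (Q*x) k)
      = ∑' k, (g k - w k) := by
    rw [← tsum_mul_left (a := 1+b), ← tsum_mul_left (a := b), ← tsum_mul_left (a := (Q*x)^2),
      ← Summable.tsum_sub S1 (S2.mul_left _), ← Summable.tsum_add (S1.sub (S2.mul_left _)) (S3.mul_left _),
      ← Summable.tsum_add ((S1.sub (S2.mul_left _)).add (S3.mul_left _)) (S2.mul_left _)]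
    apply tsum_congr
    intro k
    rw [jterm_Qmul, jterm_Q2mul]
    simp only [hg, hw]
    ring
  have hzero : ∑' k, (g k - w k) = 0 := by
    rw [Summable.tsum_sub Sg Sw, hsumw, sub_self]
  rw [hzero] at key
  linear_combination key

lemma ofReal_mul_cpow {r : ℝ} (hr : 0 < r) {z : ℂ} (hz : z ≠ 0) (c : ℂ) :
    ((r:ℂ) * z) ^ c = (r:ℂ) ^ c * z ^ c := by
  have hr' : (r:ℂ) ≠ 0 := Complex.ofReal_ne_zero.2 hr.ne'
  rw [Complex.cpow_def_of_ne_zero (mul_ne_zero hr' hz), Complex.log_ofReal_mul hr hz, add_mul,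
    Complex.exp_add, ← Complex.cpow_def_of_ne_zero hz, Complex.cpow_def_of_ne_zero hr',
    Complex.ofReal_log hr.le]

lemma rpow_eq_one_imp {q : ℝ} (hq0 : 0 < q) (hq1 : q < 1) {r : ℝ} (h : q ^ r = 1) : r = 0 := by
  have := congrArg Real.log h
  rw [Real.log_rpow hq0, Real.log_one] at this
  have hlog : Real.log q ≠ 0 := Real.log_ne_zero_of_pos_of_ne_one hq0 hq1.ne
  exact (mul_eq_zero.1 this).resolve_right hlog

lemma factor_ne {q : ℝ} (hq0 : 0 < q) (hq1 : q < 1) {e : ℝ} (he : ∀ i : ℕ, e + 2*i ≠ 0) :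
    ∀ i : ℕ, (1 : ℂ) - ((q ^ e : ℝ):ℂ) * (((q:ℂ))^2)^i ≠ 0 := by
  intro i
  have h2 : ((q:ℂ))^2 = ((q^(2:ℕ) : ℝ) : ℂ) := by push_cast; ring
  rw [h2, ← Complex.ofReal_pow, ← Complex.ofReal_mul]
  have hmul : q ^ e * (q ^ (2:ℕ)) ^ i = q ^ (e + 2*i) := by
    rw [← pow_mul, ← Real.rpow_natCast q (2*i), ← Real.rpow_add hq0]
    push_cast; ring_nf
  rw [hmul]
  intro hcon
  have : ((q ^ (e + 2*i) : ℝ):ℂ) = 1 := by linear_combination -hcon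
  have : q ^ (e + 2*i) = 1 := by exact_mod_cast this
  exact he i (rpow_eq_one_imp hq0 hq1 this)


lemma continuousAt_jsum' {Q a : ℂ} (hQ : ‖Q‖ < 1)
    (h1 : ∀ i : ℕ, 1 - Q^2 * (Q^2) ^ i ≠ 0)
    (h2 : ∀ i : ℕ, 1 - a * (Q^2) ^ i ≠ 0) :
    ContinuousAt (fun x : ℂ => ∑' k, jterm Q a x k) 0 := by
  have hQ2 : ‖Q^2‖ < 1 := by
    rw [norm_pow]
    exact pow_lt_one₀ (norm_nonneg _) hQ (by norm_num)
  obtain ⟨δ₁, hδ₁0, -, hδ₁⟩ := exists_delta hQ2 h1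
  obtain ⟨δ₂, hδ₂0, -, hδ₂⟩ := exists_delta hQ2 h2
  have hc : ContinuousOn (fun x : ℂ => ∑' k, jterm Q a x k) (Metric.ball 0 1) := by
    apply continuousOn_tsum (u := fun k => ‖Q‖ ^ (k*(k+1)) * (1:ℝ) ^ (2*k) / (δ₁*δ₂) ^ k)
    · intro k
      apply Continuous.continuousOn
      unfold jterm
      fun_prop
    · exact summable_bound (norm_nonneg Q) hQ zero_le_one (by positivity)
    · intro k x hx
      simp only [Metric.mem_ball, dist_zero_right] at hx
      exact jterm_bound hδ₁0 hδ₂0 (qPochC_norm_ge hδ₁0 hδ₁) (qPochC_norm_ge hδ₂0 hδ₂) hx.le k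
  exact hc.continuousAt (Metric.ball_mem_nhds 0 one_pos)

lemma rpow_cast_helper {q : ℝ} (hq0 : 0 < q) (m : ℕ) (t : ℝ) :
    ((q ^ (2*(m:ℝ) + t) : ℝ):ℂ) = ((q:ℂ))^(2*m) * ((q^t:ℝ):ℂ) := by
  rw [show 2*(m:ℝ) + t = ((2*m:ℕ):ℝ) + t from by push_cast; ring, Real.rpow_add hq0,
    Real.rpow_natCast, Complex.ofReal_mul, Complex.ofReal_pow]

noncomputable def jC (q α : ℝ) (x : ℂ) : ℂ :=
  ∑' n : ℕ, (-1) ^ n * (q : ℂ) ^ (n * (n + 1)) * x ^ (2 * n) /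
    (qPochC ((q : ℂ) ^ 2) ((q : ℂ) ^ 2) n *
      qPochC ((q : ℂ) ^ 2) (((q ^ (2 * α + 2) : ℝ) : ℂ)) n)

/-- `γ_ν(x) = x^{-2ν} j_{-ν}(q^{-ν} x; q²)`. -/
noncomputable def gammaC (q ν : ℝ) (x : ℂ) : ℂ :=
  x ^ ((-(2 * ν) : ℝ) : ℂ) * jC q (-ν) (((q ^ (-ν) : ℝ) : ℂ) * x)

theorem stmt11 (q ν : ℝ) (hq0 : 0 < q) (hq1 : q < 1) (hν : -1 < ν)
    (hνnotint : ∀ k : ℤ, ν ≠ (k : ℝ))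
    (P : ℤ → ℂ → ℂ)
    (hPinit : ∀ μ : ℂ, P (-1) μ = 0 ∧ P 0 μ = 1)
    (hPrec : ∀ (n : ℕ) (μ : ℂ),
        ((q ^ (2 * (n : ℝ) + ν + 1) : ℝ) : ℂ) * P ((n : ℤ) + 1) μ
        - ((q ^ (2 * (n : ℝ)) : ℝ) : ℂ) * (1 + ((q ^ (2 * ν) : ℝ) : ℂ)) * P (n : ℤ) μ
        + ((q ^ (2 * (n : ℝ) + ν - 1) : ℝ) : ℂ) * P ((n : ℤ) - 1) μ = μ * P (n : ℤ) μ) :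
    ∀ (n : ℕ) (lam : ℂ), lam ≠ 0 →
      P (n : ℤ) (-lam ^ 2) =
        ((q ^ (-(n : ℝ) * (ν + 1)) : ℝ) : ℂ) * lam ^ ((2 * ν : ℝ) : ℂ) *
          (((q ^ (-(2 * ν)) : ℝ) : ℂ) - 1)⁻¹ *
          (jC q ν ((q : ℂ) ^ (-(n : ℤ)) * lam) * gammaC q ν ((q : ℂ) * lam)
            - gammaC q ν ((q : ℂ) ^ (-(n : ℤ)) * lam) * jC q ν ((q : ℂ) * lam)) := by
  -- ## setup
  have hQne : (q:ℂ) ≠ 0 := Complex.ofReal_ne_zero.2 hq0.ne'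
  have hQnorm : ‖(q:ℂ)‖ < 1 := by
    rwa [Complex.norm_real, Real.norm_eq_abs, abs_of_pos hq0]
  set Q : ℂ := (q:ℂ) with hQdef
  set c : ℂ := ((q ^ ν : ℝ):ℂ) with hcdef
  have hcne : c ≠ 0 := Complex.ofReal_ne_zero.2 (Real.rpow_pos_of_pos hq0 ν).ne'
  have hν0 : ν ≠ 0 := fun h => hνnotint 0 (by simp [h])
  -- nonvanishing of Pochhammer factors
  have h1 : ∀ i : ℕ, (1:ℂ) - Q^2 * (Q^2) ^ i ≠ 0 := by
    have e : Q^2 = ((q ^ (2:ℝ) : ℝ):ℂ) := by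
      rw [show (2:ℝ) = ((2:ℕ):ℝ) from by norm_num, Real.rpow_natCast]
      push_cast; ring
    intro i
    nth_rewrite 1 [e]
    exact factor_ne (e := 2) hq0 hq1 (fun j => by have : (0:ℝ) ≤ (j:ℝ) := Nat.cast_nonneg j; intro hc'; linarith) i
  have hP : ∀ i : ℕ, (1:ℂ) - ((q ^ (2*ν+2) : ℝ):ℂ) * (Q^2) ^ i ≠ 0 :=
    factor_ne (e := 2*ν+2) hq0 hq1 (fun j => by have : (0:ℝ) ≤ (j:ℝ) := Nat.cast_nonneg j; intro hc'; linarith)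
  have hM : ∀ i : ℕ, (1:ℂ) - ((q ^ (2*(-ν)+2) : ℝ):ℂ) * (Q^2) ^ i ≠ 0 :=
    factor_ne (e := 2*(-ν)+2) hq0 hq1 (fun j => by
      intro hc'
      exact hνnotint ((j:ℤ)+1) (by push_cast; linarith)
      )
  -- the two sums
  set jjs : ℂ → ℂ := fun y => ∑' k, jterm Q ((q ^ (2*ν+2) : ℝ):ℂ) y k with hjjs
  set FM : ℂ → ℂ := fun y => ∑' k, jterm Q ((q ^ (2*(-ν)+2) : ℝ):ℂ) y k with hFM
  -- rpow cast facts
  have hc2 : ((q ^ (2*ν) : ℝ):ℂ) = c^2 := by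
    rw [hcdef, show (2*ν) = ν * ((2:ℕ):ℝ) from by push_cast; ring, Real.rpow_mul hq0.le,
      Real.rpow_natCast]
    push_cast; ring
  have hm2 : ((q ^ (-(2*ν)) : ℝ):ℂ) = (c^2)⁻¹ := by
    rw [Real.rpow_neg hq0.le, Complex.ofReal_inv, hc2]
  have hd : ((q ^ (-ν) : ℝ):ℂ) = c⁻¹ := by
    rw [Real.rpow_neg hq0.le, Complex.ofReal_inv, hcdef]
  have haPb : ((q ^ (2*ν+2) : ℝ):ℂ) = c^2 * Q^2 := by
    rw [show (2*ν+2 : ℝ) = 2*((0:ℕ):ℝ) + (2*ν+2) from by norm_num] at *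
    rw [rpow_cast_helper hq0 0 (2*ν+2)]
    rw [show (2*ν+2 : ℝ) = (2*ν) + ((2:ℕ):ℝ) from by norm_num, Real.rpow_add hq0,
      Real.rpow_natCast, Complex.ofReal_mul, hc2]
    push_cast; ring
  have haMb : ((q ^ (2*(-ν)+2) : ℝ):ℂ) = (c^2)⁻¹ * Q^2 := by
    rw [show (2*(-ν)+2 : ℝ) = (-(2*ν)) + ((2:ℕ):ℝ) from by norm_num, Real.rpow_add hq0,
      Real.rpow_natCast, Complex.ofReal_mul, hm2]
    push_cast; ring
  have hcc : c^2 * (c^2)⁻¹ = 1 := mul_inv_cancel₀ (pow_ne_zero 2 hcne)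
  have hcc2 : c^2 * c⁻¹^2 = 1 := by rw [inv_pow]; exact hcc
  -- functional equations
  have E1 : ∀ x : ℂ, jjs x - (1+c^2) * jjs (Q*x) + c^2 * jjs (Q^2*x)
      = -((Q*x)^2) * jjs (Q*x) := fun x => jsum_FE hQnorm h1 hP haPb x
  have E2raw : ∀ y : ℂ, FM y - (1+(c^2)⁻¹) * FM (Q*y) + (c^2)⁻¹ * FM (Q^2*y)
      = -((Q*y)^2) * FM (Q*y) := fun y => jsum_FE hQnorm h1 hM haMb y
  have E2 : ∀ x : ℂ, c^2 * FM (c⁻¹*x) - (1+c^2) * FM (c⁻¹*(Q*x)) + FM (c⁻¹*(Q^2*x))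
      = -((Q*x)^2) * FM (c⁻¹*(Q*x)) := by
    intro x
    have h := E2raw (c⁻¹*x)
    rw [show Q*(c⁻¹*x) = c⁻¹*(Q*x) from by ring, show Q^2*(c⁻¹*x) = c⁻¹*(Q^2*x) from by ring] at h
    linear_combination c^2 * h + (FM (c⁻¹*(Q*x)) - FM (c⁻¹*(Q^2*x)) + (Q*x)^2*FM (c⁻¹*(Q*x))) * hcc
      + (-2*(Q*x)^2*FM (c⁻¹*(Q*x))) * hcc2
  -- the Wronskian-type function
  set Gf : ℂ → ℂ := fun x => (c^2)⁻¹ * jjs x * FM (c⁻¹*(Q*x)) - FM (c⁻¹*x) * jjs (Q*x) with hGf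
  have hGstep : ∀ x : ℂ, Gf x = Gf (Q*x) := by
    intro x
    simp only [hGf]
    rw [show Q*(Q*x) = Q^2*x from by ring]
    linear_combination ((c^2)⁻¹ * FM (c⁻¹*(Q*x))) * E1 x - ((c^2)⁻¹ * jjs (Q*x)) * E2 x
      + ((c^2)⁻¹ * jjs (Q*x) * FM (c⁻¹*x) - (c^2)⁻¹ * jjs (Q^2*x) * FM (c⁻¹*(Q*x))) * hcc
      + (-((1 - c⁻¹^2) * (FM (c⁻¹*(Q*x)) * jjs (Q^2*x) - FM (c⁻¹*x) * jjs (Q*x)))) * hcc2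
  have hGiter : ∀ (k : ℕ) (x : ℂ), Gf x = Gf (Q^k * x) := by
    intro k
    induction k with
    | zero => intro x; simp
    | succ k ih =>
      intro x
      rw [ih x, hGstep (Q^k*x), show Q*(Q^k*x) = Q^(k+1)*x from by rw [pow_succ]; ring]
  have CP : ContinuousAt jjs 0 := continuousAt_jsum' hQnorm h1 hP
  have CM : ContinuousAt FM 0 := continuousAt_jsum' hQnorm h1 hM
  have hGcont : ContinuousAt Gf 0 := by
    have hlin : ∀ b : ℂ, ContinuousAt (fun x : ℂ => b * x) 0 := fun b =>
      (continuous_const.mul continuous_id).continuousAt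
    have t1 : ContinuousAt (fun x : ℂ => FM (c⁻¹*(Q*x))) 0 := by
      have h0 : ContinuousAt (fun x : ℂ => c⁻¹*(Q*x)) 0 := by fun_prop
      have CM' : ContinuousAt FM (c⁻¹*(Q*(0:ℂ))) := by simpa using CM
      exact ContinuousAt.comp (f := fun x : ℂ => c⁻¹*(Q*x)) CM' h0
    have t2 : ContinuousAt (fun x : ℂ => FM (c⁻¹*x)) 0 := by
      have CM' : ContinuousAt FM (c⁻¹*(0:ℂ)) := by simpa using CM
      exact ContinuousAt.comp (f := fun x : ℂ => c⁻¹*x) CM' (hlin c⁻¹)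
    have t3 : ContinuousAt (fun x : ℂ => jjs (Q*x)) 0 := by
      have CP' : ContinuousAt jjs (Q*(0:ℂ)) := by simpa using CP
      exact ContinuousAt.comp (f := fun x : ℂ => Q*x) CP' (hlin Q)
    exact ((continuousAt_const.mul CP).mul t1).sub (t2.mul t3)
  have hjjs0 : jjs 0 = 1 := jsum_zero
  have hFM0 : FM 0 = 1 := jsum_zero
  have hG0 : Gf 0 = (c^2)⁻¹ - 1 := by
    simp only [hGf, mul_zero, hjjs0, hFM0]
    ring
  have hGconst : ∀ x : ℂ, Gf x = (c^2)⁻¹ - 1 := by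
    intro x
    have hlim : Tendsto (fun k : ℕ => Q^k * x) atTop (nhds 0) := by
      simpa using (tendsto_pow_atTop_nhds_zero_of_norm_lt_one hQnorm).mul_const x
    have h2 : Tendsto (fun k : ℕ => Gf (Q^k * x)) atTop (nhds (Gf 0)) :=
      hGcont.tendsto.comp hlim
    have h3 : (fun k : ℕ => Gf (Q^k*x)) = fun _ => Gf x := funext fun k => (hGiter k x).symm
    rw [h3] at h2
    rw [← hG0]
    exact (tendsto_nhds_unique h2 tendsto_const_nhds).symm
  -- ## constants and recurrences for the discrete problem
  have hQQ : Q * Q⁻¹ = 1 := mul_inv_cancel₀ hQne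
  have hc2ne1 : c^2 ≠ 1 := by
    intro h
    have h2 : ((q ^ (2*ν) : ℝ):ℂ) = ((1:ℝ):ℂ) := by rw [hc2, h]; norm_num
    have h3 : q ^ (2*ν) = 1 := by exact_mod_cast h2
    have := rpow_eq_one_imp hq0 hq1 h3
    exact hν0 (by linarith)
  have h1c2 : (1:ℂ) - c^2 ≠ 0 := sub_ne_zero.2 (fun h => hc2ne1 h.symm)
  have hco1 : ∀ m:ℕ, ((q ^ (2*(m:ℝ)+ν+1) : ℝ):ℂ) = Q^(2*m)*(c*Q) := by
    intro m
    rw [show 2*(m:ℝ)+ν+1 = 2*(m:ℝ)+(ν+1) from by ring, rpow_cast_helper hq0 m (ν+1),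
      Real.rpow_add hq0, Real.rpow_one, Complex.ofReal_mul]
  have hco3 : ∀ m:ℕ, ((q ^ (2*(m:ℝ)+ν-1) : ℝ):ℂ) = Q^(2*m)*(c*Q⁻¹) := by
    intro m
    rw [show 2*(m:ℝ)+ν-1 = 2*(m:ℝ)+(ν-1) from by ring, rpow_cast_helper hq0 m (ν-1),
      Real.rpow_sub hq0, Real.rpow_one, Complex.ofReal_div, div_eq_mul_inv]
  have hco2 : ∀ m:ℕ, ((q ^ (2*(m:ℝ)) : ℝ):ℂ) = Q^(2*m) := by
    intro m
    rw [show 2*(m:ℝ) = 2*(m:ℝ) + 0 from by ring, rpow_cast_helper hq0 m 0, Real.rpow_zero]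
    simp [hQdef]
  have hcq1 : ((q ^ (ν+1) : ℝ):ℂ) = c*Q := by
    rw [Real.rpow_add hq0, Real.rpow_one, Complex.ofReal_mul]
  -- ## main part
  intro n lam hlam
  set K : ℂ := ((c^2)⁻¹ - 1)⁻¹ with hKdef
  have hK1 : K * (1 - c^2) = c^2 := by
    rw [hKdef, show (c^2)⁻¹ - 1 = (1 - c^2) * (c^2)⁻¹ from by linear_combination hcc,
      mul_inv_rev, inv_inv, mul_assoc, inv_mul_cancel₀ h1c2, mul_one]
  have hrecC : ∀ m:ℕ, Q^(2*m)*(c*Q) * P ((m:ℤ)+1) (-lam^2) - Q^(2*m)*(1+c^2)*P (m:ℤ) (-lam^2)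
      + Q^(2*m)*(c*Q⁻¹)*P ((m:ℤ)-1) (-lam^2) = -lam^2 * P (m:ℤ) (-lam^2) := by
    intro m
    have h := hPrec m (-lam^2)
    rw [hco1 m, hco2 m, hco3 m, hc2] at h
    linear_combination h
  have hrecQ : ∀ m:ℕ, Q^(2*m)*c*Q^2 * P ((m:ℤ)+1) (-lam^2) - Q^(2*m+1)*(1+c^2)*P (m:ℤ) (-lam^2)
      + Q^(2*m)*c*P ((m:ℤ)-1) (-lam^2) = -(Q*lam^2) * P (m:ℤ) (-lam^2) := by
    intro m
    have h := hrecC m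
    linear_combination Q * h - (Q^(2*m)*c*P ((m:ℤ)-1) (-lam^2)) * hQQ
  have hMr : ∀ k:ℕ, Q^k * ((Q^k)⁻¹ * lam) = lam := by
    intro k
    field_simp
  have hMr2 : ∀ k:ℕ, (Q^k)^2 * ((Q^k)⁻¹ * lam)^2 = lam^2 := by
    intro k
    have h := congrArg (fun z => z^2) (hMr k)
    simpa [mul_pow] using h
  have hQM : ∀ k:ℕ, Q * ((Q^(k+1))⁻¹ * lam) = (Q^k)⁻¹ * lam := by
    intro k
    have hp : (Q:ℂ)^(k+1) = Q^k * Q := pow_succ Q k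
    rw [hp, mul_inv]
    field_simp
  have hQ2M : ∀ k:ℕ, Q^2 * ((Q^(k+2))⁻¹ * lam) = (Q^k)⁻¹ * lam := by
    intro k
    have h1 := hQM (k+1)
    have h2 := hQM k
    calc Q^2 * ((Q^(k+2))⁻¹ * lam) = Q * (Q * ((Q^(k+1+1))⁻¹ * lam)) := by ring_nf
      _ = Q * ((Q^(k+1))⁻¹ * lam) := by rw [h1]
      _ = (Q^k)⁻¹ * lam := h2
  have E1s : ∀ m:ℕ, jjs ((Q^(m+2))⁻¹*lam) - (1+c^2)*jjs ((Q^(m+1))⁻¹*lam)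
      + c^2*jjs ((Q^m)⁻¹*lam) = -(((Q^(m+1))⁻¹*lam)^2) * jjs ((Q^(m+1))⁻¹*lam) := by
    intro m
    have h := E1 ((Q^(m+2))⁻¹*lam)
    rw [show m+2 = (m+1)+1 from rfl] at h
    rw [hQM (m+1)] at h
    rw [show (m+1)+1 = m+2 from rfl, hQ2M m] at h
    exact h
  have E2s : ∀ m:ℕ, c^2 * FM (c⁻¹*((Q^(m+2))⁻¹*lam)) - (1+c^2)*FM (c⁻¹*((Q^(m+1))⁻¹*lam))
      + FM (c⁻¹*((Q^m)⁻¹*lam)) = -(((Q^(m+1))⁻¹*lam)^2) * FM (c⁻¹*((Q^(m+1))⁻¹*lam)) := by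
    intro m
    have h := E2 ((Q^(m+2))⁻¹*lam)
    rw [show m+2 = (m+1)+1 from rfl] at h
    rw [hQM (m+1)] at h
    rw [show (m+1)+1 = m+2 from rfl, hQ2M m] at h
    exact h
  -- the inductive claim
  set Cl : ℕ → Prop := fun m =>
    c^2 * c^m * Q^m * P (m:ℤ) (-lam^2)
      = K * (jjs ((Q^m)⁻¹*lam) * FM (c⁻¹*(Q*lam))
          - c^(2*m+2) * FM (c⁻¹*((Q^m)⁻¹*lam)) * jjs (Q*lam)) with hCl
  have hP0 : P 0 (-lam^2) = 1 := (hPinit _).2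
  have hPm1 : P (-1) (-lam^2) = 0 := (hPinit _).1
  have W := hGconst lam
  simp only [hGf] at W
  have b0 : (c:ℂ)^2 * P 0 (-lam^2)
      = K * (jjs lam * FM (c⁻¹*(Q*lam)) - c^2 * FM (c⁻¹*lam) * jjs (Q*lam)) := by
    rw [hP0]
    linear_combination (-(K*c^2)) * W + (K*(jjs lam*FM (c⁻¹*(Q*lam)) - 1)) * hcc + (-1 : ℂ) * hK1
  have base0 : Cl 0 := by
    simp only [hCl, Nat.cast_zero]
    rw [show ((Q:ℂ)^0)⁻¹*lam = lam from by norm_num]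
    linear_combination b0
  have base1 : Cl 1 := by
    have hA : Q * (Q⁻¹ * lam) = lam := by field_simp
    have hB : Q^2 * (Q⁻¹ * lam) = Q*lam := by
      rw [show Q^2 = Q*Q from sq Q, mul_assoc, hA]
    have e1 := E1 (Q⁻¹*lam); rw [hA, hB] at e1
    have e2 := E2 (Q⁻¹*lam); rw [hA, hB] at e2
    have hr := hrecC 0
    norm_num at hr
    rw [hP0, hPm1] at hr
    simp only [hCl, Nat.cast_one]
    rw [show ((Q:ℂ)^1)⁻¹*lam = Q⁻¹*lam from by rw [pow_one]]
    linear_combination c^2 * hr - K * FM (c⁻¹*(Q*lam)) * e1 + K * c^2 * jjs (Q*lam) * e2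
      + (1 + c^2 - lam^2) * b0 + (-(c^2 - c^2*lam^2 + c^4)) * hP0
  have keystep : ∀ m:ℕ, Cl m → Cl (m+1) → Cl (m+2) := by
    intro m clm clm1
    simp only [hCl] at clm clm1 ⊢
    have hQpow : (Q:ℂ)^(m+2) ≠ 0 := pow_ne_zero _ hQne
    apply mul_left_cancel₀ hQpow
    have hr := hrecQ (m+1)
    push_cast at hr clm clm1 ⊢
    rw [show (m:ℤ)+1-1 = (m:ℤ) from by ring, show (m:ℤ)+1+1 = (m:ℤ)+2 from by ring] at hr
    linear_combination c^(m+3) * hr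
      - Q^(m+2)*K*FM (c⁻¹*(Q*lam)) * E1s m
      + Q^(m+2)*K*c^(2*m+4)*jjs (Q*lam) * E2s m
      + ((1+c^2) - ((Q^(m+1))⁻¹*lam)^2)*Q^(m+2) * clm1
      - c^2*Q^(m+2) * clm
      + c^(m+3)*Q*(P ((m:ℤ)+1) (-lam^2)) * hMr2 (m+1)
  have keyCl : ∀ m:ℕ, Cl m ∧ Cl (m+1) := by
    intro m
    induction m with
    | zero => exact ⟨base0, base1⟩
    | succ m ih => exact ⟨ih.2, keystep m ih.1 ih.2⟩
  have cl := (keyCl n).1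
  simp only [hCl] at cl
  -- ## translate the goal
  have hQzn : Q^(-(n:ℤ)) = ((q ^ (-(n:ℝ)) : ℝ):ℂ) := by
    rw [Real.rpow_neg hq0.le, Real.rpow_natCast, Complex.ofReal_inv, Complex.ofReal_pow,
      zpow_neg, zpow_natCast]
  have hrnpos : (0:ℝ) < q ^ (-(n:ℝ)) := Real.rpow_pos_of_pos hq0 _
  have hrncast : ((q ^ (-(n:ℝ)) : ℝ):ℂ) = (Q^n)⁻¹ := by
    rw [← hQzn, zpow_neg, zpow_natCast]
  have hpref : ((q ^ (-(n:ℝ)*(ν+1)) : ℝ):ℂ) = (c^n*Q^n)⁻¹ := by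
    rw [show -(n:ℝ)*(ν+1) = -((ν+1)*(n:ℝ)) from by ring, Real.rpow_neg hq0.le,
      Real.rpow_mul hq0.le, Real.rpow_natCast, Complex.ofReal_inv, Complex.ofReal_pow, hcq1,
      mul_pow]
  have hg1 : gammaC q ν (Q*lam)
      = (c^2)⁻¹ * lam ^ ((-(2*ν) : ℝ):ℂ) * FM (c⁻¹*(Q*lam)) := by
    simp only [gammaC, hd]
    rw [show jC q (-ν) (c⁻¹*(Q*lam)) = FM (c⁻¹*(Q*lam)) from rfl]
    rw [show Q*lam = (q:ℂ)*lam from rfl, ofReal_mul_cpow hq0 hlam,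
      ← Complex.ofReal_cpow hq0.le (-(2*ν)), hm2]
  have hrn2 : ((q ^ (-(n:ℝ)) : ℝ) ^ (-(2*ν)) : ℝ) = (q^ν)^(2*n) := by
    rw [← Real.rpow_natCast (q^ν) (2*n), ← Real.rpow_mul hq0.le, ← Real.rpow_mul hq0.le]
    congr 1
    push_cast
    ring
  have hg2 : gammaC q ν (Q^(-(n:ℤ))*lam)
      = c^(2*n) * lam ^ ((-(2*ν) : ℝ):ℂ) * FM (c⁻¹*((Q^n)⁻¹*lam)) := by
    rw [hQzn]
    simp only [gammaC, hd]
    rw [show jC q (-ν) (c⁻¹*(((q ^ (-(n:ℝ)) : ℝ):ℂ)*lam)) = FM (c⁻¹*(((q ^ (-(n:ℝ)) : ℝ):ℂ)*lam)) from rfl]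
    rw [ofReal_mul_cpow hrnpos hlam, ← Complex.ofReal_cpow hrnpos.le (-(2*ν)), hrn2,
      hrncast]
    push_cast
    ring
  have hjn : jC q ν (Q^(-(n:ℤ))*lam) = jjs ((Q^n)⁻¹*lam) := by
    rw [hQzn, hrncast]
    rfl
  have hj1 : jC q ν (Q*lam) = jjs (Q*lam) := rfl
  have hw : lam ^ ((2*ν : ℝ):ℂ) * lam ^ ((-(2*ν) : ℝ):ℂ) = 1 := by
    rw [← Complex.cpow_add _ _ hlam, ← Complex.ofReal_add]
    norm_num
  rw [hg1, hg2, hjn, hj1, hm2, hpref]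
  have hcn : (c^n : ℂ) ≠ 0 := pow_ne_zero _ hcne
  have hQn : (Q^n : ℂ) ≠ 0 := pow_ne_zero _ hQne
  apply mul_left_cancel₀ (show c^2*c^n*Q^n ≠ 0 from by
    exact mul_ne_zero (mul_ne_zero (pow_ne_zero 2 hcne) hcn) hQn)
  rw [cl]
  have hinv : (c^n*Q^n) * (c^n*Q^n)⁻¹ = 1 := mul_inv_cancel₀ (mul_ne_zero hcn hQn)
  set A : ℂ := jjs ((Q^n)⁻¹*lam) * FM (c⁻¹*(Q*lam)) with hA
  set B : ℂ := FM (c⁻¹*((Q^n)⁻¹*lam)) * jjs (Q*lam) with hB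
  set w1 : ℂ := lam ^ ((2*ν : ℝ):ℂ) with hw1
  set w2 : ℂ := lam ^ ((-(2*ν) : ℝ):ℂ) with hw2
  linear_combination (-(c^2*w1*K*((c^2)⁻¹*w2*A - c^(2*n)*w2*B))) * hinv
    + (-(c^2*K*((c^2)⁻¹*A - c^(2*n)*B))) * hw
    + (-(K*A)) * hcc
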